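/- Fix t ≥ 0 and let μ be a positive Borel measure on (0,∞) such that for all λ > 0: ∫_{(0,∞)} (1 − e^{−λx}) μ(dx) = √λ · tanh(√λ · t). Then the first moment of μ equals t: ∫_{(0,∞)} x μ(dx) = t. -/

import Mathlib

open MeasureTheory Set ENNReal Filter Topology

private lemma bst_aux_antitone :
    AntitoneOn (fun y : ℝ => (1 - Real.exp (-y)) / y) (Ioi 0) := by
  have hderiv : ∀ y : ℝ, y ≠ 0 →
      HasDerivAt (fun y : ℝ => (1 - Real.exp (-y)) / y)
        ((Real.exp (-y) * y - (1 - Real.exp (-y)) * 1) / y ^ 2) y := by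
    intro y hy
    have h1 : HasDerivAt (fun y : ℝ => 1 - Real.exp (-y)) (Real.exp (-y)) y := by
      have h2 := (Real.hasDerivAt_exp (-y)).comp y (hasDerivAt_neg y)
      exact ((hasDerivAt_const y (1:ℝ)).sub h2).congr_deriv (by simp)
    exact h1.div (hasDerivAt_id y) hy
  apply antitoneOn_of_deriv_nonpos (convex_Ioi 0)
  · apply ContinuousOn.div
    · fun_prop
    · fun_prop
    · intro x hx; exact ne_of_gt hx
  · intro x hx
    rw [interior_Ioi] at hx
    exact (hderiv x (ne_of_gt hx)).differentiableAt.differentiableWithinAt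
  · intro x hx
    rw [interior_Ioi] at hx
    rw [(hderiv x (ne_of_gt hx)).deriv]
    apply div_nonpos_of_nonpos_of_nonneg
    · have h1 : Real.exp (-x) * Real.exp x = 1 := by
        rw [← Real.exp_add]; simp
      nlinarith [Real.add_one_le_exp x, Real.exp_pos (-x)]
    · positivity

private lemma bst_key_mono (x : ℝ) (hx : 0 < x) {a b : ℝ} (ha : 0 < a) (hab : a ≤ b) :
    (1 - Real.exp (-(b * x))) * b⁻¹ ≤ (1 - Real.exp (-(a * x))) * a⁻¹ := by
  have hb : 0 < b := lt_of_lt_of_le ha hab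
  have hax : a * x ∈ Ioi (0:ℝ) := mul_pos ha hx
  have hbx : b * x ∈ Ioi (0:ℝ) := mul_pos hb hx
  have h := bst_aux_antitone hax hbx (by nlinarith)
  have h2 := mul_le_mul_of_nonneg_left h (le_of_lt hx)
  calc (1 - Real.exp (-(b*x))) * b⁻¹
      = x * ((1 - Real.exp (-(b*x))) / (b*x)) := by field_simp
    _ ≤ x * ((1 - Real.exp (-(a*x))) / (a*x)) := h2
    _ = (1 - Real.exp (-(a*x))) * a⁻¹ := by field_simp

private lemma bst_hasDerivAt_tanh : HasDerivAt Real.tanh 1 0 := by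
  have h : HasDerivAt (fun x : ℝ => Real.sinh x / Real.cosh x)
      ((Real.cosh 0 * Real.cosh 0 - Real.sinh 0 * Real.sinh 0) / Real.cosh 0 ^ 2) 0 :=
    (Real.hasDerivAt_sinh 0).div (Real.hasDerivAt_cosh 0) (by simp [(Real.cosh_pos 0).ne'])
  have he : (fun x : ℝ => Real.sinh x / Real.cosh x) = Real.tanh := by
    funext x; rw [Real.tanh_eq_sinh_div_cosh]
  rw [he] at h
  simpa using h

/-- Proposition 6.8 of the paper: if a positive Borel
measure `μ` on `(0,∞)` has Bernstein transform
`∫ (1 - e^{-λx}) μ(dx) = √λ·tanh(√λ·t)` for all `λ > 0`, then its first moment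
equals `t`: `∫ x μ(dx) = t`. -/
theorem bernstein_sqrt_tanh_first_moment
    (t : ℝ) (ht : 0 ≤ t)
    (μ : Measure ℝ) (hμpos : μ (Iic 0) = 0)
    (hbern : ∀ l > (0:ℝ),
      (∫⁻ x in Ioi (0:ℝ), ENNReal.ofReal (1 - Real.exp (-(l * x))) ∂μ)
        = ENNReal.ofReal (Real.sqrt l * Real.tanh (Real.sqrt l * t))) :
    (∫⁻ x in Ioi (0:ℝ), ENNReal.ofReal x ∂μ) = ENNReal.ofReal t := by
  set g : ℕ → ℝ → ℝ≥0∞ := fun n x =>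
    ENNReal.ofReal ((1 - Real.exp (-(((n:ℝ)+1)⁻¹ * x))) * ((n:ℝ)+1)) with hg
  -- monotonicity of g in n
  have hmono : Monotone g := by
    intro n m hnm x
    by_cases hx : 0 < x
    · apply ENNReal.ofReal_le_ofReal
      have ha : (0:ℝ) < ((m:ℝ)+1)⁻¹ := by positivity
      have hab : ((m:ℝ)+1)⁻¹ ≤ ((n:ℝ)+1)⁻¹ := by
        apply inv_anti₀ (by positivity)
        have : (n:ℝ) ≤ (m:ℝ) := by exact_mod_cast hnm
        linarith
      have h := bst_key_mono x hx ha hab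
      simpa [inv_inv] using h
    · have hle : (1 - Real.exp (-(((n:ℝ)+1)⁻¹ * x))) * ((n:ℝ)+1) ≤ 0 := by
        apply mul_nonpos_of_nonpos_of_nonneg
        · have : (1:ℝ) ≤ Real.exp (-(((n:ℝ)+1)⁻¹ * x)) := by
            apply Real.one_le_exp
            push_neg at hx
            have : ((n:ℝ)+1)⁻¹ * x ≤ 0 := mul_nonpos_of_nonneg_of_nonpos (by positivity) hx
            linarith
          linarith
        · positivity
      have h0 : g n x = 0 := ENNReal.ofReal_eq_zero.2 hle
      rw [h0]; exact zero_le
  have hmeas : ∀ n, Measurable (g n) := by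
    intro n
    apply Measurable.ennreal_ofReal
    fun_prop
  -- pointwise limit of g n x to ofReal x for x > 0
  have hlim : ∀ x ∈ Ioi (0:ℝ), Tendsto (fun n => g n x) atTop (𝓝 (ENNReal.ofReal x)) := by
    intro x hx
    simp only [mem_Ioi] at hx
    have hF : HasDerivAt (fun u : ℝ => 1 - Real.exp (-u)) 1 0 := by
      have h2 := (Real.hasDerivAt_exp (-(0:ℝ))).comp 0 (hasDerivAt_neg (0:ℝ))
      have := (hasDerivAt_const (0:ℝ) (1:ℝ)).sub h2
      exact this.congr_deriv (by simp)
    have hslope := hasDerivAt_iff_tendsto_slope.1 hF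
    have hinv : Tendsto (fun n : ℕ => ((n:ℝ)+1)⁻¹) atTop (𝓝 0) := by
      simpa [one_div] using tendsto_one_div_add_atTop_nhds_zero_nat (𝕜 := ℝ)
    have hseq : Tendsto (fun n : ℕ => ((n:ℝ)+1)⁻¹ * x) atTop (𝓝[≠] 0) := by
      apply tendsto_nhdsWithin_of_tendsto_nhds_of_eventually_within
      · simpa using hinv.mul_const x
      · filter_upwards with n
        have : (0:ℝ) < ((n:ℝ)+1)⁻¹ * x := by positivity
        simp [this.ne']
    have hcomp := hslope.comp hseq
    have hreal : Tendsto (fun n : ℕ =>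
        (1 - Real.exp (-(((n:ℝ)+1)⁻¹ * x))) * ((n:ℝ)+1)) atTop (𝓝 x) := by
      have hx2 := hcomp.const_mul x
      rw [mul_one] at hx2
      apply hx2.congr
      intro n
      have hn : (0:ℝ) < (n:ℝ)+1 := by positivity
      simp only [Function.comp_apply, slope_fun_def, vsub_eq_sub, smul_eq_mul, neg_zero,
        Real.exp_zero, sub_self, sub_zero]
      have hxne : x ≠ 0 := hx.ne'
      field_simp
    have := (ENNReal.continuous_ofReal.tendsto x).comp hreal
    simpa [hg, Function.comp_def] using this
  have hsup : ∀ x ∈ Ioi (0:ℝ), (⨆ n, g n x) = ENNReal.ofReal x := by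
    intro x hx
    exact tendsto_nhds_unique (tendsto_atTop_iSup (fun n m h => hmono h x)) (hlim x hx)
  -- value of each integral
  have hval : ∀ n : ℕ, (∫⁻ x in Ioi (0:ℝ), g n x ∂μ)
      = ENNReal.ofReal (((n:ℝ)+1) * (Real.sqrt (((n:ℝ)+1)⁻¹)
          * Real.tanh (Real.sqrt (((n:ℝ)+1)⁻¹) * t))) := by
    intro n
    have hn : (0:ℝ) < (n:ℝ)+1 := by positivity
    have hl : (0:ℝ) < ((n:ℝ)+1)⁻¹ := by positivity
    have h1 : ∀ x : ℝ, g n x = ENNReal.ofReal ((n:ℝ)+1)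
        * ENNReal.ofReal (1 - Real.exp (-(((n:ℝ)+1)⁻¹ * x))) := by
      intro x
      rw [hg]
      simp only
      rw [mul_comm, ENNReal.ofReal_mul hn.le]
    simp_rw [h1]
    rw [lintegral_const_mul _ (by apply Measurable.ennreal_ofReal; fun_prop)]
    rw [hbern _ hl, ← ENNReal.ofReal_mul hn.le]
  -- limit of the values
  have hA : Tendsto (fun n : ℕ => ((n:ℝ)+1) * (Real.sqrt (((n:ℝ)+1)⁻¹)
      * Real.tanh (Real.sqrt (((n:ℝ)+1)⁻¹) * t))) atTop (𝓝 t) := by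
    have hG : HasDerivAt (fun s : ℝ => Real.tanh (s * t)) t 0 := by
      have h0 : HasDerivAt (fun s : ℝ => s * t) t 0 := by
        simpa using (hasDerivAt_id (0:ℝ)).mul_const t
      have h1 : HasDerivAt Real.tanh 1 ((fun s : ℝ => s * t) 0) := by
        simpa using bst_hasDerivAt_tanh
      simpa [Function.comp_def] using h1.comp 0 h0
    have hslope := hasDerivAt_iff_tendsto_slope.1 hG
    have hinv : Tendsto (fun n : ℕ => ((n:ℝ)+1)⁻¹) atTop (𝓝 0) := by
      simpa [one_div] using tendsto_one_div_add_atTop_nhds_zero_nat (𝕜 := ℝ)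
    have hsq : Tendsto (fun n : ℕ => Real.sqrt (((n:ℝ)+1)⁻¹)) atTop (𝓝[≠] 0) := by
      apply tendsto_nhdsWithin_of_tendsto_nhds_of_eventually_within
      · exact (Real.continuous_sqrt.tendsto' 0 0 Real.sqrt_zero).comp hinv
      · filter_upwards with n
        have h3 : (0:ℝ) < Real.sqrt (((n:ℝ)+1)⁻¹) := Real.sqrt_pos.2 (by positivity)
        simp only [mem_compl_iff, mem_singleton_iff]
        exact h3.ne'
    have hcomp := hslope.comp hsq
    apply hcomp.congr
    intro n
    set s := Real.sqrt (((n:ℝ)+1)⁻¹) with hs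
    have hspos : (0:ℝ) < s := Real.sqrt_pos.2 (by positivity)
    have hss : s * s = ((n:ℝ)+1)⁻¹ := Real.mul_self_sqrt (by positivity)
    have hone : ((n:ℝ)+1) * (s * s) = 1 := by
      rw [hss]; field_simp
    simp only [Function.comp_apply, slope_fun_def, vsub_eq_sub, smul_eq_mul, sub_zero, zero_mul,
      Real.tanh_zero]
    rw [← hs, inv_mul_eq_div, div_eq_iff hspos.ne']
    linear_combination (-Real.tanh (s * t)) * hone
  -- put it together
  have hcongr : (∫⁻ x in Ioi (0:ℝ), ENNReal.ofReal x ∂μ)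
      = ∫⁻ x in Ioi (0:ℝ), (⨆ n, g n x) ∂μ := by
    apply setLIntegral_congr_fun measurableSet_Ioi
    intro x hx
    exact (hsup x hx).symm
  rw [hcongr, lintegral_iSup (fun n => hmeas n) hmono]
  have hbmono : Monotone (fun n => ∫⁻ x in Ioi (0:ℝ), g n x ∂μ) := by
    intro n m h
    exact lintegral_mono fun x => hmono h x
  have h1 : Tendsto (fun n => ∫⁻ x in Ioi (0:ℝ), g n x ∂μ) atTop
      (𝓝 (⨆ n, ∫⁻ x in Ioi (0:ℝ), g n x ∂μ)) := tendsto_atTop_iSup hbmono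
  have h2 : Tendsto (fun n => ∫⁻ x in Ioi (0:ℝ), g n x ∂μ) atTop
      (𝓝 (ENNReal.ofReal t)) := by
    simp_rw [hval]
    exact (ENNReal.continuous_ofReal.tendsto t).comp hA
  exact tendsto_nhds_unique h1 h2
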